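/- Let V be a finite set equipped with a linear order ≺, let k ≥ 1, and let c : V × V → ℝ≥0 satisfy c(x,y) ≤ c(y,x) whenever x ≺ y (as holds for forward versus backward edges in a hierarchically ordered instance). Let P be a path with at most k+1 vertices, and let P_sorted be the path on the same vertex set that visits its vertices in ≺-increasing order (so that it consists only of forward edges). Then c^{(k)}(P_sorted) ≤ c^{(k)}(P). -/

import Mathlib

noncomputable section

/-- The `k`-hop cost of a (non-closed) walk `w_1, …, w_t` (repeated vertices allowed):
`∑_{Δ=1}^{k} ∑_{i=1}^{t-Δ} c(w_i, w_{i+Δ})`. -/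
def walkHopCost {V : Type*} (c : V → V → ℝ) (k : ℕ) (l : List V) : ℝ :=
  ∑ Δ ∈ Finset.Icc 1 k, (List.zipWith c l (l.drop Δ)).sum

/-- Sum over ordered pairs (i before j) of `f`. -/
def pairSum {V : Type*} (f : V → V → ℝ) : List V → ℝ
  | [] => 0
  | a :: t => (t.map (f a)).sum + pairSum f t

lemma pairSum_perm {V : Type*} (f : V → V → ℝ) (hf : ∀ x y, f x y = f y x)
    {l l' : List V} (h : l.Perm l') : pairSum f l = pairSum f l' := by
  induction h with
  | nil => rfl
  | cons a h ih =>
      simp only [pairSum, ih, (h.map (f a)).sum_eq]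
  | swap a b t =>
      simp only [pairSum, List.map_cons, List.sum_cons, hf a b]
      ring
  | trans _ _ ih1 ih2 => rw [ih1, ih2]

lemma take_one_drop_sum (s : List ℝ) : ∀ n, s.length ≤ n →
    ∑ i ∈ Finset.range n, ((s.drop i).take 1).sum = s.sum := by
  induction s with
  | nil => intro n _; simp
  | cons b s ih =>
      intro n hn
      cases n with
      | zero => simp at hn
      | succ m =>
          rw [Finset.sum_range_succ']
          simp only [List.drop_succ_cons, List.drop_zero, List.take_cons, List.sum_cons]
          rw [ih m (by simpa using hn)]
          simp [add_comm]

lemma walkHopCost_cons {V : Type*} (c : V → V → ℝ) (k : ℕ) (a : V) (t : List V)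
    (ht : t.length ≤ k) :
    walkHopCost c k (a :: t) = (t.map (c a)).sum + walkHopCost c k t := by
  unfold walkHopCost
  have key : ∀ Δ ∈ Finset.Icc 1 k,
      (List.zipWith c (a :: t) ((a :: t).drop Δ)).sum
        = (((t.map (c a)).drop (Δ - 1)).take 1).sum
          + (List.zipWith c t (t.drop Δ)).sum := by
    intro Δ hΔ
    obtain ⟨h1, _⟩ := Finset.mem_Icc.mp hΔ
    obtain ⟨d, rfl⟩ : ∃ d, Δ = d + 1 := ⟨Δ - 1, (Nat.succ_pred_eq_of_pos h1).symm⟩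
    simp only [List.drop_succ_cons, Nat.add_sub_cancel]
    rcases hd : t.drop d with _ | ⟨b, r⟩
    · have h2 : t.drop (d + 1) = [] := by
        rw [← List.tail_drop, hd]; rfl
      rw [← List.map_drop, hd, h2]; simp
    · have hr : t.drop (d + 1) = r := by
        rw [← List.tail_drop, hd]; rfl
      rw [← List.map_drop, hd, hr]; simp
  rw [Finset.sum_congr rfl key, Finset.sum_add_distrib]
  congr 1
  have hIcc : Finset.Icc 1 k = Finset.Ico 1 (k + 1) := by
    rw [Finset.Ico_add_one_right_eq_Icc]
  rw [hIcc, Finset.sum_Ico_eq_sum_range]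
  have h1 : ∀ i, 1 + i - 1 = i := by omega
  simp only [Nat.add_sub_cancel, h1]
  exact take_one_drop_sum _ k (by simpa using ht)

theorem statement18 {V : Type*} [LinearOrder V]
    (c : V → V → ℝ) (k : ℕ) (hk : 1 ≤ k)
    (hc0 : ∀ x y, 0 ≤ c x y)
    (hcmono : ∀ x y, x < y → c x y ≤ c y x)
    (P Q : List V) (hP : P.Nodup)
    (hlen : P.length ≤ k + 1)
    (hperm : Q.Perm P) (hsorted : Q.Pairwise (· < ·)) :
    walkHopCost c k Q ≤ walkHopCost c k P := by
  set f : V → V → ℝ := fun x y => c (min x y) (max x y) with hf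
  have hfsymm : ∀ x y, f x y = f y x := by
    intro x y; simp [hf, min_comm, max_comm]
  -- lower bound for any list
  have lb : ∀ l : List V, l.length ≤ k + 1 → pairSum f l ≤ walkHopCost c k l := by
    intro l
    induction l with
    | nil => intro _; simp [pairSum, walkHopCost]
    | cons a t ih =>
        intro hl
        have ht : t.length ≤ k := by simpa using hl
        rw [walkHopCost_cons c k a t ht]
        unfold pairSum
        gcongr ?_ + ?_
        · refine List.sum_le_sum fun x _ => ?_
          rcases lt_trichotomy a x with h | h | h
          · simp [hf, min_eq_left h.le, max_eq_right h.le]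
          · simp [hf, h]
          · simpa [hf, min_eq_right h.le, max_eq_left h.le] using hcmono x a h

        · exact ih (le_trans ht (Nat.le_succ k))
  -- equality for sorted lists
  have eqsorted : ∀ l : List V, l.Pairwise (· < ·) → l.length ≤ k + 1 →
      walkHopCost c k l = pairSum f l := by
    intro l
    induction l with
    | nil => intro _ _; simp [pairSum, walkHopCost]
    | cons a t ih =>
        intro hs hl
        have ht : t.length ≤ k := by simpa using hl
        rw [walkHopCost_cons c k a t ht]
        unfold pairSum
        rw [ih hs.of_cons (le_trans ht (Nat.le_succ k))]
        congr 1
        refine congrArg List.sum (List.map_congr_left ?_)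
        intro x hx
        have hax : a < x := (List.pairwise_cons.mp hs).1 x hx
        simp [hf, min_eq_left hax.le, max_eq_right hax.le]
  have hQlen : Q.length ≤ k + 1 := hperm.length_eq ▸ hlen
  calc walkHopCost c k Q = pairSum f Q := eqsorted Q hsorted hQlen
    _ = pairSum f P := pairSum_perm f hfsymm hperm
    _ ≤ walkHopCost c k P := lb P hlen

end
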